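/- Let $(X,Y)$ be jointly Gaussian with mean zero, unit variances, and correlation $\rho \in [-1,1]$. Then for any $t \geq 0$, $\Pr(\max(0,X)\cdot\max(0,Y) > t) \leq \exp(-t/(1+\rho))$. -/

import Mathlib

open MeasureTheory ProbabilityTheory Real

lemma gauss_pdf_exp (c : ℝ) (x : ℝ) :
    gaussianPDFReal 0 1 x * rexp (c * x) = rexp (c ^ 2 / 2) * gaussianPDFReal c 1 x := by
  have h1 : -(x - 0) ^ 2 / (2 * ((1:NNReal):ℝ)) + c * x
      = c ^ 2 / 2 + -(x - c) ^ 2 / (2 * ((1:NNReal):ℝ)) := by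
    push_cast; ring
  simp only [gaussianPDFReal]
  rw [mul_assoc, ← Real.exp_add, h1, Real.exp_add]
  ring

lemma lintegral_exp_mul_gaussian (c : ℝ) :
    ∫⁻ x, ENNReal.ofReal (rexp (c * x)) ∂(gaussianReal 0 1) =
      ENNReal.ofReal (rexp (c ^ 2 / 2)) := by
  rw [gaussianReal_of_var_ne_zero 0 one_ne_zero,
    lintegral_withDensity_eq_lintegral_mul _ (measurable_gaussianPDF 0 1)
      (by fun_prop)]
  have : ∀ x : ℝ, (gaussianPDF 0 1 * fun x => ENNReal.ofReal (rexp (c * x))) x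
      = ENNReal.ofReal (rexp (c ^ 2 / 2)) * ENNReal.ofReal (gaussianPDFReal c 1 x) := by
    intro x
    simp only [Pi.mul_apply, gaussianPDF]
    rw [← ENNReal.ofReal_mul (gaussianPDFReal_nonneg 0 1 x), gauss_pdf_exp,
      ENNReal.ofReal_mul (Real.exp_nonneg _)]
  simp_rw [this]
  rw [lintegral_const_mul' _ _ ENNReal.ofReal_ne_top, lintegral_gaussianPDFReal_eq_one c one_ne_zero, mul_one]



/-- The law of a centered bivariate Gaussian with unit variances and correlation `ρ`,
realized as the pushforward of a pair of independent standard Gaussians under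
`(z₁, z₂) ↦ (z₁, ρ z₁ + √(1-ρ²) z₂)`. -/
noncomputable def jointGaussian (ρ : ℝ) : Measure (ℝ × ℝ) :=
  ((gaussianReal 0 1).prod (gaussianReal 0 1)).map
    (fun p => (p.1, ρ * p.1 + Real.sqrt (1 - ρ ^ 2) * p.2))

/-- For `(X,Y) ~ N(0, Σ_ρ)` and `t ≥ 0`,
`Pr(max(0,X) ⬝ max(0,Y) > t) ≤ exp(-t/(1+ρ))`. -/
theorem relu_product_tail_bound (ρ : ℝ) (hρ : ρ ∈ Set.Icc (-1 : ℝ) 1)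
    (t : ℝ) (ht : 0 ≤ t) :
    jointGaussian ρ {p : ℝ × ℝ | t < max 0 p.1 * max 0 p.2} ≤
      ENNReal.ofReal (Real.exp (-t / (1 + ρ))) := by
  have hmf : Measurable (fun p : ℝ × ℝ => (p.1, ρ * p.1 + Real.sqrt (1 - ρ ^ 2) * p.2)) := by
    fun_prop
  have hprob : IsProbabilityMeasure (jointGaussian ρ) := by
    unfold jointGaussian
    exact Measure.isProbabilityMeasure_map hmf.aemeasurable
  by_cases hmain : 0 < t ∧ 0 < 1 + ρ
  case neg =>
    have h0 : -t / (1 + ρ) = 0 := by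
      rcases not_and_or.mp hmain with h | h
      · have : t = 0 := le_antisymm (not_lt.mp h) ht
        simp [this]
      · have h1 : 1 + ρ = 0 := le_antisymm (not_lt.mp h) (by linarith [hρ.1])
        simp [h1]
    rw [h0, Real.exp_zero, ENNReal.ofReal_one]
    exact prob_le_one
  obtain ⟨ht0, hρ0⟩ := hmain
  set b := Real.sqrt (1 - ρ ^ 2) with hb
  set l := Real.sqrt t / (1 + ρ) with hl
  have hl0 : 0 ≤ l := div_nonneg (Real.sqrt_nonneg _) hρ0.le
  have hb2 : b ^ 2 = 1 - ρ ^ 2 := Real.sq_sqrt (by nlinarith [hρ.1, hρ.2])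
  have hst : Real.sqrt t ^ 2 = t := Real.sq_sqrt ht
  have hset : MeasurableSet {p : ℝ × ℝ | t < max 0 p.1 * max 0 p.2} := by
    apply measurableSet_lt measurable_const
    fun_prop
  rw [jointGaussian, Measure.map_apply hmf hset]
  set ν := (gaussianReal 0 1).prod (gaussianReal 0 1)
  set S := (fun p : ℝ × ℝ => (p.1, ρ * p.1 + b * p.2)) ⁻¹'
      {p : ℝ × ℝ | t < max 0 p.1 * max 0 p.2} with hS
  have key : ∀ z : ℝ × ℝ, z ∈ S → 2 * Real.sqrt t ≤ (1 + ρ) * z.1 + b * z.2 := by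
    intro z hz
    simp only [hS, Set.mem_preimage, Set.mem_setOf_eq] at hz
    set x := z.1
    set y := ρ * z.1 + b * z.2
    have hx : 0 < x := by
      by_contra hx
      rw [max_eq_left (not_lt.mp hx), zero_mul] at hz
      linarith
    have hy : 0 < y := by
      by_contra hy
      rw [max_eq_left (not_lt.mp hy), mul_zero] at hz
      linarith
    rw [max_eq_right hx.le, max_eq_right hy.le] at hz
    have h1 : Real.sqrt t ≤ Real.sqrt x * Real.sqrt y := by
      rw [← Real.sqrt_mul hx.le]
      exact Real.sqrt_le_sqrt hz.le
    have hx2 : Real.sqrt x ^ 2 = x := Real.sq_sqrt hx.le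
    have hy2 : Real.sqrt y ^ 2 = y := Real.sq_sqrt hy.le
    have hxy : (1 + ρ) * z.1 + b * z.2 = x + y := by simp only [x, y]; ring
    rw [hxy]
    nlinarith [sq_nonneg (Real.sqrt x - Real.sqrt y)]
  have hmono : ν S ≤ ∫⁻ z : ℝ × ℝ, ENNReal.ofReal (Real.exp (-(l * (2 * Real.sqrt t)))
      * (Real.exp (l * (1 + ρ) * z.1) * Real.exp (l * b * z.2))) ∂ν := by
    have hSm : MeasurableSet S := hmf hset
    rw [← lintegral_indicator_one hSm]
    refine lintegral_mono fun z => ?_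
    by_cases hz : z ∈ S
    · rw [Set.indicator_of_mem hz]
      simp only [Pi.one_apply]
      rw [← Real.exp_add, ← Real.exp_add]
      rw [← ENNReal.ofReal_one]
      apply ENNReal.ofReal_le_ofReal
      apply Real.one_le_exp
      have := key z hz
      nlinarith
    · rw [Set.indicator_of_notMem hz]
      exact zero_le
  refine hmono.trans ?_
  have hsplit : ∫⁻ z : ℝ × ℝ, ENNReal.ofReal (Real.exp (-(l * (2 * Real.sqrt t)))
      * (Real.exp (l * (1 + ρ) * z.1) * Real.exp (l * b * z.2))) ∂ν
      = ENNReal.ofReal (Real.exp (-(l * (2 * Real.sqrt t)))) *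
        (ENNReal.ofReal (Real.exp ((l * (1 + ρ)) ^ 2 / 2)) *
          ENNReal.ofReal (Real.exp ((l * b) ^ 2 / 2))) := by
    have : ∀ z : ℝ × ℝ, ENNReal.ofReal (Real.exp (-(l * (2 * Real.sqrt t)))
        * (Real.exp (l * (1 + ρ) * z.1) * Real.exp (l * b * z.2)))
        = ENNReal.ofReal (Real.exp (-(l * (2 * Real.sqrt t)))) *
          (ENNReal.ofReal (Real.exp (l * (1 + ρ) * z.1)) *
            ENNReal.ofReal (Real.exp (l * b * z.2))) := by
      intro z
      rw [ENNReal.ofReal_mul (Real.exp_nonneg _), ENNReal.ofReal_mul (Real.exp_nonneg _)]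
    simp_rw [this]
    rw [lintegral_const_mul' _ _ ENNReal.ofReal_ne_top]
    congr 1
    rw [lintegral_prod_mul (f := fun x => ENNReal.ofReal (Real.exp (l * (1 + ρ) * x)))
      (g := fun x => ENNReal.ofReal (Real.exp (l * b * x))) (by fun_prop) (by fun_prop),
      lintegral_exp_mul_gaussian, lintegral_exp_mul_gaussian]
  rw [hsplit, ← ENNReal.ofReal_mul (Real.exp_nonneg _), ← ENNReal.ofReal_mul (Real.exp_nonneg _),
    ← Real.exp_add, ← Real.exp_add]
  apply ENNReal.ofReal_le_ofReal
  apply le_of_eq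
  congr 1
  have hρne : (1 : ℝ) + ρ ≠ 0 := ne_of_gt hρ0
  rw [hl]
  field_simp
  ring_nf
  simp only [Real.sq_sqrt ht, hb2]
  ring
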